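/- Let X be a finite set, D a probability distribution on X × {0,1} with random pair (x, y), and p : X → [0,1] a predictor. Consider the decision task T2 = (A, u) with action set A = [0,1] and quadratic payoff u(a, y) = 1 − (a − y)², whose best-response function is the identity σ_{T2}(v) = v. Then CFDL_{T2}(p, D) = ECE₂(p, D)². -/

import Mathlib

open scoped Classical
open Finset Set

noncomputable section

/-- `D` is a probability distribution on `X × {0,1}` (labels as `Bool`). -/
def IsDistribution {X : Type} [Fintype X] (D : X × Bool → ℝ) : Prop :=
  (∀ z, 0 ≤ D z) ∧ (∑ z : X × Bool, D z) = 1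

/-- A predictor takes values in `[0,1]`. -/
def IsPredictor {X : Type} (p : X → ℝ) : Prop := ∀ x, p x ∈ Set.Icc (0 : ℝ) 1

/-- Numerical value of a Boolean label. -/
def yval (y : Bool) : ℝ := if y then 1 else 0

/-- Marginal mass of a point `x`. -/
def massx {X : Type} (D : X × Bool → ℝ) (x : X) : ℝ := D (x, false) + D (x, true)

/-- Expectation of `f(x, y)` under `D`. -/
def expval {X : Type} [Fintype X] (D : X × Bool → ℝ) (f : X × Bool → ℝ) : ℝ :=
  ∑ z : X × Bool, D z * f z

/-- The recalibration `p̂(x) = E[y | p(x)]`. -/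
def phat {X : Type} [Fintype X] (D : X × Bool → ℝ) (p : X → ℝ) (x : X) : ℝ :=
  (∑ x' : X, if p x' = p x then D (x', true) else 0) /
    (∑ x' : X, if p x' = p x then massx D x' else 0)

/-- `ECE₂(p, D) = (E[(E[y | p(x)] - p(x))²])^{1/2}`. -/
def ECE2 {X : Type} [Fintype X] (D : X × Bool → ℝ) (p : X → ℝ) : ℝ :=
  Real.sqrt (∑ x : X, massx D x * (phat D p x - p x) ^ 2)

/-- `σT` is a best-response function for the decision task `(A, u)`. -/
def IsBestResponse {A : Type} (u : A → Bool → ℝ) (σT : ℝ → A) : Prop :=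
  ∀ v ∈ Set.Icc (0 : ℝ) 1, ∀ a : A,
    v * u a true + (1 - v) * u a false ≤ v * u (σT v) true + (1 - v) * u (σT v) false

/-- The expected payoff `E[u(σ(p(x)), y)]`. -/
def payoff {X A : Type} [Fintype X] (D : X × Bool → ℝ) (p : X → ℝ)
    (u : A → Bool → ℝ) (σ : ℝ → A) : ℝ :=
  expval D (fun z => u (σ (p z.1)) z.2)

/-- `CFDL_T(p, D) = max_σ E[u(σ(p(x)), y)] - E[u(σT(p(x)), y)]`. -/
def CFDL {X A : Type} [Fintype X] (D : X × Bool → ℝ) (p : X → ℝ)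
    (u : A → Bool → ℝ) (σT : ℝ → A) : ℝ :=
  sSup {e : ℝ | ∃ σ : ℝ → A, e = payoff D p u σ} - payoff D p u σT

/-- The quadratic payoff `u(a, y) = 1 - (a - y)²` on the action set `A = [0,1]`. -/
def uQuad : (Set.Icc (0 : ℝ) 1) → Bool → ℝ := fun a y => 1 - ((a : ℝ) - yval y) ^ 2

/-- The identity best-response function for the quadratic task (`σ_{T2}(v) = v`
for `v ∈ [0,1]`). -/
def σQuad : ℝ → (Set.Icc (0 : ℝ) 1) := fun v => Set.projIcc 0 1 zero_le_one v

/-! ### Auxiliary definitions and lemmas -/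

/-- Level-set recalibration as a function of the predicted value. -/
def phatv {X : Type} [Fintype X] (D : X × Bool → ℝ) (p : X → ℝ) (v : ℝ) : ℝ :=
  (∑ x' : X, if p x' = v then D (x', true) else 0) /
    (∑ x' : X, if p x' = v then massx D x' else 0)

lemma phat_eq_phatv {X : Type} [Fintype X] (D : X × Bool → ℝ) (p : X → ℝ) (x : X) :
    phat D p x = phatv D p (p x) := rfl

lemma phatv_mem {X : Type} [Fintype X] (D : X × Bool → ℝ) (hD : IsDistribution D)
    (p : X → ℝ) (v : ℝ) : phatv D p v ∈ Set.Icc (0 : ℝ) 1 := by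
  set N := ∑ x' : X, if p x' = v then D (x', true) else 0 with hN
  set M := ∑ x' : X, if p x' = v then massx D x' else 0 with hM
  have hN0 : 0 ≤ N := Finset.sum_nonneg fun x _ => by
    by_cases h : p x = v <;> simp [h, hD.1 (x, true)]
  have hNM : N ≤ M := Finset.sum_le_sum fun x _ => by
    by_cases h : p x = v <;> simp [h, massx]
    · nlinarith [hD.1 (x, false)]
  have hpv : phatv D p v = N / M := rfl
  rcases eq_or_lt_of_le (hN0.trans hNM) with hM0 | hM0
  · rw [hpv, ← hM0]; simp
  · rw [hpv]
    constructor
    · exact div_nonneg hN0 hM0.le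
    · rw [div_le_one hM0]; exact hNM

/-- The optimal post-processing: play the recalibrated value. -/
def sigmaStar {X : Type} [Fintype X] (D : X × Bool → ℝ) (p : X → ℝ) :
    ℝ → (Set.Icc (0 : ℝ) 1) := fun v => Set.projIcc 0 1 zero_le_one (phatv D p v)

lemma sigmaStar_coe {X : Type} [Fintype X] (D : X × Bool → ℝ) (hD : IsDistribution D)
    (p : X → ℝ) (v : ℝ) : (sigmaStar D p v : ℝ) = phatv D p v := by
  rw [sigmaStar, Set.projIcc_of_mem _ (phatv_mem D hD p v)]

/-- Key cancellation lemma: fiberwise, `massx · phat` sums to `D(·,true)`. -/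
lemma key_cancel {X : Type} [Fintype X] (D : X × Bool → ℝ) (hD : IsDistribution D)
    (p : X → ℝ) (c : ℝ → ℝ) :
    ∑ x : X, (massx D x * phatv D p (p x) - D (x, true)) * c (p x) = 0 := by
  rw [← Finset.sum_fiberwise_of_maps_to (g := p) (t := Finset.univ.image p)
      (fun x _ => Finset.mem_image_of_mem p (Finset.mem_univ x))]
  refine Finset.sum_eq_zero fun v hv => ?_
  have h1 : ∀ x ∈ Finset.univ.filter (fun x => p x = v),
      (massx D x * phatv D p (p x) - D (x, true)) * c (p x)
        = (massx D x * phatv D p v - D (x, true)) * c v := by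
    intro x hx
    rw [(Finset.mem_filter.1 hx).2]
  rw [Finset.sum_congr rfl h1, ← Finset.sum_mul]
  have h2 : ∑ x ∈ Finset.univ.filter (fun x => p x = v),
      (massx D x * phatv D p v - D (x, true))
      = (∑ x ∈ Finset.univ.filter (fun x => p x = v), massx D x) * phatv D p v
        - ∑ x ∈ Finset.univ.filter (fun x => p x = v), D (x, true) := by
    rw [Finset.sum_sub_distrib, Finset.sum_mul]
  rw [h2]
  set M := ∑ x ∈ Finset.univ.filter (fun x => p x = v), massx D x with hM
  set N := ∑ x ∈ Finset.univ.filter (fun x => p x = v), D (x, true) with hN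
  have hMeq : (∑ x' : X, if p x' = v then massx D x' else 0) = M := by
    rw [hM, Finset.sum_filter]
  have hNeq : (∑ x' : X, if p x' = v then D (x', true) else 0) = N := by
    rw [hN, Finset.sum_filter]
  have hphatv : phatv D p v = N / M := by rw [phatv, hMeq, hNeq]
  by_cases hM0 : M = 0
  · have hN0 : N = 0 := by
      have h0 : 0 ≤ N := Finset.sum_nonneg fun x _ => hD.1 (x, true)
      have hNM : N ≤ M := Finset.sum_le_sum fun x _ => by
        have := hD.1 (x, false); simp [massx]; linarith
      linarith
    rw [hN0, hM0]; ring
  · rw [hphatv]; field_simp; ring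

/-- The quadratic loss of a post-processing map `a : ℝ → ℝ`. -/
def qloss {X : Type} [Fintype X] (D : X × Bool → ℝ) (p : X → ℝ) (a : ℝ → ℝ) : ℝ :=
  ∑ x : X, (massx D x * (a (p x)) ^ 2 - 2 * D (x, true) * a (p x) + D (x, true))

lemma payoff_eq {X : Type} [Fintype X] (D : X × Bool → ℝ) (hD : IsDistribution D)
    (p : X → ℝ) (σ : ℝ → (Set.Icc (0 : ℝ) 1)) :
    payoff D p uQuad σ = 1 - qloss D p (fun v => (σ v : ℝ)) := by
  rw [payoff, expval, qloss]
  rw [Fintype.sum_prod_type]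
  have : ∀ x : X, ∑ b : Bool, D (x, b) * uQuad (σ (p x)) b
      = massx D x - (massx D x * ((σ (p x) : ℝ)) ^ 2
          - 2 * D (x, true) * (σ (p x) : ℝ) + D (x, true)) := by
    intro x
    rw [Fintype.sum_bool]
    simp [uQuad, yval, massx]
    ring
  rw [Finset.sum_congr rfl fun x _ => this x, Finset.sum_sub_distrib]
  have hmass : ∑ x : X, massx D x = 1 := by
    rw [← hD.2, Fintype.sum_prod_type]
    exact Finset.sum_congr rfl fun x _ => by rw [Fintype.sum_bool, massx]; ring
  rw [hmass]

/-- Every post-processing loses at least as much as `phatv`. -/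
lemma qloss_ge {X : Type} [Fintype X] (D : X × Bool → ℝ) (hD : IsDistribution D)
    (p : X → ℝ) (a : ℝ → ℝ) :
    qloss D p a = qloss D p (phatv D p)
      + ∑ x : X, massx D x * (a (p x) - phatv D p (p x)) ^ 2 := by
  have hkey := key_cancel D hD p (fun v => a v - phatv D p v)
  rw [qloss, qloss]
  rw [← sub_eq_iff_eq_add']
  rw [← Finset.sum_sub_distrib]
  have : ∀ x : X,
      (massx D x * (a (p x)) ^ 2 - 2 * D (x, true) * a (p x) + D (x, true))
      - (massx D x * (phatv D p (p x)) ^ 2 - 2 * D (x, true) * phatv D p (p x) + D (x, true))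
      = massx D x * (a (p x) - phatv D p (p x)) ^ 2
        + 2 * ((massx D x * phatv D p (p x) - D (x, true)) * (a (p x) - phatv D p (p x))) := by
    intro x; ring
  rw [Finset.sum_congr rfl fun x _ => this x, Finset.sum_add_distrib, ← Finset.mul_sum, hkey]
  ring

/-- for the decision task `T2` with action set `[0,1]` and quadratic
payoff `u(a,y) = 1 - (a - y)²`, the identity is the best-response function, and
`CFDL_{T2}(p, D) = ECE₂(p, D)²`. -/
theorem cfdl_quadratic_eq_ece2_sq
    {X : Type} [Fintype X] (D : X × Bool → ℝ) (hD : IsDistribution D)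
    (p : X → ℝ) (hp : IsPredictor p) :
    IsBestResponse uQuad σQuad ∧ (∀ v ∈ Set.Icc (0 : ℝ) 1, (σQuad v : ℝ) = v) ∧
      CFDL D p uQuad σQuad = ECE2 D p ^ 2 := by
  have hid : ∀ v ∈ Set.Icc (0 : ℝ) 1, (σQuad v : ℝ) = v := by
    intro v hv; rw [σQuad, Set.projIcc_of_mem _ hv]
  refine ⟨?_, hid, ?_⟩
  · intro v hv a
    have h := hid v hv
    simp only [uQuad, yval]
    rw [h]
    norm_num
    nlinarith [sq_nonneg ((a : ℝ) - v)]
  · -- CFDL computation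
    have hstar : (fun v => (sigmaStar D p v : ℝ)) = phatv D p := by
      funext v; exact sigmaStar_coe D hD p v
    have hub : ∀ e ∈ {e : ℝ | ∃ σ : ℝ → (Set.Icc (0:ℝ) 1), e = payoff D p uQuad σ},
        e ≤ payoff D p uQuad (sigmaStar D p) := by
      rintro e ⟨σ, rfl⟩
      rw [payoff_eq D hD, payoff_eq D hD, hstar,
        qloss_ge D hD p (fun v => (σ v : ℝ))]
      have : 0 ≤ ∑ x : X, massx D x * ((σ (p x) : ℝ) - phatv D p (p x)) ^ 2 := by
        refine Finset.sum_nonneg fun x _ => mul_nonneg ?_ (sq_nonneg _)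
        have := hD.1 (x, false); have := hD.1 (x, true)
        simp [massx]; linarith
      linarith
    have hmem : payoff D p uQuad (sigmaStar D p)
        ∈ {e : ℝ | ∃ σ : ℝ → (Set.Icc (0:ℝ) 1), e = payoff D p uQuad σ} :=
      ⟨sigmaStar D p, rfl⟩
    have hsup : sSup {e : ℝ | ∃ σ : ℝ → (Set.Icc (0:ℝ) 1), e = payoff D p uQuad σ}
        = payoff D p uQuad (sigmaStar D p) :=
      le_antisymm (csSup_le ⟨_, hmem⟩ hub) (le_csSup ⟨_, hub⟩ hmem)
    rw [CFDL, hsup, payoff_eq D hD, payoff_eq D hD, hstar]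
    have hq : (fun v => ((σQuad v : ℝ))) = fun v => (σQuad v : ℝ) := rfl
    have hquad : qloss D p (fun v => (σQuad v : ℝ))
        = qloss D p (phatv D p) + ∑ x : X, massx D x * (p x - phatv D p (p x)) ^ 2 := by
      rw [qloss_ge D hD p (fun v => (σQuad v : ℝ))]
      congr 1
      refine Finset.sum_congr rfl fun x _ => ?_
      rw [hid (p x) (hp x)]
    rw [hquad]
    have hnn : 0 ≤ ∑ x : X, massx D x * (phat D p x - p x) ^ 2 := by
      refine Finset.sum_nonneg fun x _ => mul_nonneg ?_ (sq_nonneg _)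
      have := hD.1 (x, false); have := hD.1 (x, true)
      simp [massx]; linarith
    rw [ECE2, Real.sq_sqrt hnn]
    have : ∑ x : X, massx D x * (phat D p x - p x) ^ 2
        = ∑ x : X, massx D x * (p x - phatv D p (p x)) ^ 2 :=
      Finset.sum_congr rfl fun x _ => by rw [phat_eq_phatv]; ring
    rw [this]; ring
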